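/- If r ≥ p + q, then for every integer m the coefficients of Q_{p,q,r} satisfy |a_m − a_{m−pq}| ≤ 1. -/

import Mathlib

open Polynomial
open scoped Classical

/-- The defining identity of the ternary inclusion-exclusion polynomial `Q_{p,q,r}`:
`Q·(z^{qr}-1)(z^{rp}-1)(z^{pq}-1)(z-1) = (z^{pqr}-1)(z^r-1)(z^q-1)(z^p-1)`. -/
def ternaryId (p q r : ℕ) (Q : Polynomial ℤ) : Prop :=
  Q * (((X : Polynomial ℤ) ^ (q * r) - 1) * ((X : Polynomial ℤ) ^ (r * p) - 1) *
      ((X : Polynomial ℤ) ^ (p * q) - 1) * ((X : Polynomial ℤ) - 1)) =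
    ((X : Polynomial ℤ) ^ (p * q * r) - 1) * ((X : Polynomial ℤ) ^ r - 1) *
      ((X : Polynomial ℤ) ^ q - 1) * ((X : Polynomial ℤ) ^ p - 1)

/-- The coefficient `a_m` of `z^m` in `Q`, indexed by `m : ℤ`, with the convention
that `a_m = 0` for `m < 0` (and automatically `a_m = 0` for `m` beyond the degree). -/
def aCoeff (Q : Polynomial ℤ) (m : ℤ) : ℤ :=
  if 0 ≤ m then Q.coeff m.toNat else 0

/-- The characteristic function `χ` of integers representable as
`i·qr + j·rp + k·pq` with integers `i, j, k ≥ 0`. -/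
noncomputable def chi (p q r : ℕ) (n : ℤ) : ℤ :=
  if ∃ i j k : ℕ, n = (i * (q * r) + j * (r * p) + k * (p * q) : ℕ) then 1 else 0

open Finset

section AuxIEP


lemma rep_exists (p q : ℕ) (hp : 3 ≤ p) (hq : 3 ≤ q) (hpq : Nat.Coprime p q) :
    ∃ ρ σ : ℕ, ρ + 1 ≤ q ∧ σ + 1 ≤ p ∧ ρ * p + σ * q = (p - 1) * (q - 1) := by
  haveI : NeZero q := ⟨by omega⟩
  set N := (p - 1) * (q - 1) with hN
  set ρ := (((N : ZMod q)) * (↑p)⁻¹).val with hρ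
  have hρq : ρ < q := ZMod.val_lt _
  have hpu : IsUnit ((p : ZMod q)) := (ZMod.isUnit_iff_coprime p q).2 hpq
  have hmod : ((ρ * p : ℕ) : ZMod q) = (N : ZMod q) := by
    push_cast
    rw [hρ, ZMod.natCast_val, ZMod.cast_id]
    rw [mul_assoc, ZMod.inv_mul_of_unit _ hpu, mul_one]
  have hdvd : (q : ℤ) ∣ (N : ℤ) - ρ * p := by
    have : (((N : ℤ) - ρ * p : ℤ) : ZMod q) = 0 := by
      push_cast
      rw [← Nat.cast_mul, hmod]
      ring
    exact (ZMod.intCast_zmod_eq_zero_iff_dvd _ q).1 this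
  obtain ⟨k, hk⟩ := hdvd
  have hub : (ρ : ℤ) * p ≤ (q - 1) * p := by
    have h1 : (ρ:ℤ) < (q:ℤ) := by exact_mod_cast hρq
    have : (ρ:ℤ) ≤ (q:ℤ) - 1 := by linarith
    nlinarith [show (0:ℤ) < p by exact_mod_cast (by omega : 0 < p)]
  have hNZ : (N : ℤ) = ((p:ℤ) - 1) * ((q:ℤ) - 1) := by
    rw [hN]; push_cast [Nat.cast_sub (by omega : 1 ≤ p), Nat.cast_sub (by omega : 1 ≤ q)]; ring
  have hk0 : 0 ≤ k := by
    by_contra h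
    have hk1 : k ≤ -1 := by omega
    have : (N : ℤ) - ρ * p ≤ -q := by
      rw [hk]; nlinarith [show (0:ℤ) < q by exact_mod_cast (by omega : 0 < q)]
    nlinarith [show (3:ℤ) ≤ p by exact_mod_cast hp, show (3:ℤ) ≤ q by exact_mod_cast hq]
  refine ⟨ρ, k.toNat, hρq, ?_, ?_⟩
  · have hkq : (k.toNat : ℤ) * q ≤ ((p:ℤ) - 1) * q := by
      have : (k.toNat : ℤ) * q = (N:ℤ) - ρ*p := by
        rw [Int.toNat_of_nonneg hk0, mul_comm]; linarith [hk]
      nlinarith [show (0:ℤ) ≤ ρ*p from by positivity, show (3:ℤ) ≤ q by exact_mod_cast hq,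
        show (3:ℤ) ≤ p by exact_mod_cast hp]
    have hfin : (k.toNat : ℤ) ≤ (p:ℤ) - 1 := by
      have hq0 : (0:ℤ) < q := by exact_mod_cast (by omega : 0 < q)
      exact le_of_mul_le_mul_right hkq hq0
    have hp1 : (k.toNat : ℤ) + 1 ≤ (p:ℤ) := by linarith
    exact_mod_cast hp1
  · have : (ρ : ℤ) * p + k.toNat * q = (N : ℤ) := by
      rw [Int.toNat_of_nonneg hk0, mul_comm k]; linarith [hk]
    exact_mod_cast this

lemma uniq_rep (p q : ℕ) (hq : 0 < q) (hpq : Nat.Coprime p q)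
    (i j i' j' : ℕ) (hi : i < q) (hi' : i' < q)
    (h : i*p + j*q = i'*p + j'*q) : i = i' ∧ j = j' := by
  have hz : ((i:ℤ) - i') * p = ((j':ℤ) - j) * q := by
    have : (i:ℤ)*p + j*q = i'*p + j'*q := by exact_mod_cast h
    linarith
  have hqd : (q:ℤ) ∣ ((i:ℤ) - i') * p := ⟨(j':ℤ) - j, by linarith [hz]⟩
  have hcop : IsCoprime (q:ℤ) (p:ℤ) := by
    rw [Int.isCoprime_iff_gcd_eq_one]
    exact_mod_cast hpq.symm
  have hdvd : (q:ℤ) ∣ (i:ℤ) - i' := hcop.dvd_of_dvd_mul_right hqd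
  have hii : i = i' := by
    have hn : ((i:ℤ) - i').natAbs < (q:ℤ).natAbs := by omega
    have := Int.eq_zero_of_dvd_of_natAbs_lt_natAbs hdvd hn
    omega
  refine ⟨hii, ?_⟩
  subst hii
  have : j * q = j' * q := by omega
  exact Nat.eq_of_mul_eq_mul_right hq this

lemma coeff_sum_X_pow {ι : Type*} [DecidableEq ι] (s : Finset ι) (f : ι → ℕ) (n : ℕ) :
    (∑ i ∈ s, (X:ℤ[X])^(f i)).coeff n = ((s.filter fun i => f i = n)).card := by
  rw [finset_sum_coeff]
  simp only [coeff_X_pow]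
  rw [Finset.sum_boole]
  simp [eq_comm]

lemma flat_aux {ι : Type*} [DecidableEq ι] (s : Finset ι) (f : ι → ℕ)
    (hinj : Set.InjOn f s) (n : ℕ) :
    0 ≤ (∑ i ∈ s, (X:ℤ[X])^(f i)).coeff n ∧ (∑ i ∈ s, (X:ℤ[X])^(f i)).coeff n ≤ 1 := by
  rw [coeff_sum_X_pow]
  refine ⟨by positivity, ?_⟩
  have : ((s.filter fun i => f i = n)).card ≤ 1 := by
    rw [Finset.card_le_one]
    intro a ha b hb
    simp only [Finset.mem_filter] at ha hb
    exact hinj ha.1 hb.1 (ha.2.trans hb.2.symm)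
  exact_mod_cast this

lemma supp_aux {ι : Type*} [DecidableEq ι] (s : Finset ι) (f : ι → ℕ) (n : ℕ)
    (h : (∑ i ∈ s, (X:ℤ[X])^(f i)).coeff n ≠ 0) : ∃ i ∈ s, f i = n := by
  rw [coeff_sum_X_pow] at h
  have : ((s.filter fun i => f i = n)).Nonempty := by
    rw [Finset.nonempty_iff_ne_empty]
    intro he
    rw [he] at h; simp at h
  obtain ⟨a, ha⟩ := this
  simp only [Finset.mem_filter] at ha
  exact ⟨a, ha.1, ha.2⟩

lemma hA_lemma (p q r ρ σ : ℕ) (hρ : ρ + 1 ≤ q) (hσ : σ + 1 ≤ p)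
    (hkey : (ρ+1)*p + (σ+1)*q = p*q + 1) :
    ((∑ x ∈ range (ρ+1) ×ˢ range (σ+1), (X:ℤ[X])^(x.1*(p*r) + x.2*(q*r)))
      - ∑ x ∈ Ico (ρ+1) q ×ˢ Ico (σ+1) p, (X:ℤ[X])^(x.1*(p*r) + x.2*(q*r) - p*q*r))
      * ((X^(p*r) - 1) * (X^(q*r) - 1)) * X^(p*q*r)
    = ((X^(p*q*r) - 1) * (X^r - 1)) * X^(p*q*r) := by
  have hS1 : (∑ x ∈ range (ρ+1) ×ˢ range (σ+1), (X:ℤ[X])^(x.1*(p*r) + x.2*(q*r)))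
      = (∑ i ∈ range (ρ+1), ((X:ℤ[X])^(p*r))^i) * (∑ j ∈ range (σ+1), ((X:ℤ[X])^(q*r))^j) := by
    rw [Finset.sum_mul_sum, Finset.sum_product]
    refine Finset.sum_congr rfl fun i _ => Finset.sum_congr rfl fun j _ => ?_
    rw [← pow_mul, ← pow_mul, ← pow_add]
    congr 1; ring
  have hS2 : (∑ x ∈ Ico (ρ+1) q ×ˢ Ico (σ+1) p, (X:ℤ[X])^(x.1*(p*r) + x.2*(q*r) - p*q*r))
        * X^(p*q*r)
      = (∑ i ∈ Ico (ρ+1) q, ((X:ℤ[X])^(p*r))^i) * (∑ j ∈ Ico (σ+1) p, ((X:ℤ[X])^(q*r))^j) := by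
    rw [Finset.sum_mul_sum, Finset.sum_product, Finset.sum_mul]
    refine Finset.sum_congr rfl fun i hi => ?_
    rw [Finset.sum_mul]
    refine Finset.sum_congr rfl fun j hj => ?_
    simp only [Finset.mem_Ico] at hi hj
    have hge : p*q*r ≤ i*(p*r) + j*(q*r) := by
      have h1 : i*(p*r) + j*(q*r) = (i*p + j*q)*r := by ring
      have h2 : p*q + 1 ≤ i*p + j*q := by
        calc p*q + 1 = (ρ+1)*p + (σ+1)*q := hkey.symm
          _ ≤ i*p + j*q :=
              Nat.add_le_add (Nat.mul_le_mul_right p hi.1) (Nat.mul_le_mul_right q hj.1)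
      rw [h1]
      exact Nat.mul_le_mul_right r (by omega)
    rw [← pow_mul, ← pow_mul, ← pow_add, ← pow_add, Nat.sub_add_cancel hge]
    congr 1; ring
  have hxq : ((X:ℤ[X])^(p*r))^q = X^(p*q*r) := by rw [← pow_mul]; congr 1; ring
  have hyp : ((X:ℤ[X])^(q*r))^p = X^(p*q*r) := by rw [← pow_mul]; congr 1; ring
  have hac : ((X:ℤ[X])^(p*r))^(ρ+1) * ((X:ℤ[X])^(q*r))^(σ+1) = X^(p*q*r) * X^r := by
    rw [← pow_mul, ← pow_mul, ← pow_add, ← pow_add]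
    congr 1
    have : p*r*(ρ+1) + q*r*(σ+1) = ((ρ+1)*p + (σ+1)*q) * r := by ring
    rw [this, hkey]; ring
  have eq1 : (∑ x ∈ range (ρ+1) ×ˢ range (σ+1), (X:ℤ[X])^(x.1*(p*r) + x.2*(q*r)))
      * (((X:ℤ[X])^(p*r) - 1) * ((X:ℤ[X])^(q*r) - 1))
      = (((X:ℤ[X])^(p*r))^(ρ+1) - 1) * (((X:ℤ[X])^(q*r))^(σ+1) - 1) := by
    calc _ = ((∑ i ∈ range (ρ+1), ((X:ℤ[X])^(p*r))^i) * ((X:ℤ[X])^(p*r) - 1))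
          * ((∑ j ∈ range (σ+1), ((X:ℤ[X])^(q*r))^j) * ((X:ℤ[X])^(q*r) - 1)) := by
            rw [hS1]; ring
      _ = _ := by rw [geom_sum_mul, geom_sum_mul]
  have eq2 : (∑ x ∈ Ico (ρ+1) q ×ˢ Ico (σ+1) p, (X:ℤ[X])^(x.1*(p*r) + x.2*(q*r) - p*q*r))
      * X^(p*q*r) * (((X:ℤ[X])^(p*r) - 1) * ((X:ℤ[X])^(q*r) - 1))
      = (((X:ℤ[X])^(p*r))^q - ((X:ℤ[X])^(p*r))^(ρ+1))
        * (((X:ℤ[X])^(q*r))^p - ((X:ℤ[X])^(q*r))^(σ+1)) := by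
    calc _ = ((∑ i ∈ Ico (ρ+1) q, ((X:ℤ[X])^(p*r))^i) * ((X:ℤ[X])^(p*r) - 1))
          * ((∑ j ∈ Ico (σ+1) p, ((X:ℤ[X])^(q*r))^j) * ((X:ℤ[X])^(q*r) - 1)) := by
            linear_combination (((X:ℤ[X])^(p*r) - 1) * ((X:ℤ[X])^(q*r) - 1)) * hS2
      _ = _ := by rw [geom_sum_Ico_mul _ hρ, geom_sum_Ico_mul _ hσ]
  linear_combination (X:ℤ[X])^(p*q*r) * eq1 - eq2
    + (((X:ℤ[X])^(q*r))^p - ((X:ℤ[X])^(q*r))^(σ+1)) * hxq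
    + ((X:ℤ[X])^(p*q*r) - ((X:ℤ[X])^(p*r))^(ρ+1)) * hyp
    + ((X:ℤ[X])^(p*q*r) - 1) * hac

lemma Xpow_sub_one_ne (n : ℕ) (hn : 0 < n) : (X:ℤ[X])^n - 1 ≠ 0 := by
  intro h
  have := congrArg (fun f => Polynomial.eval 0 f) h
  simp [zero_pow (by omega : n ≠ 0)] at this

lemma X_sub_one_ne : (X:ℤ[X]) - 1 ≠ 0 := by
  intro h
  have := congrArg (fun f => Polynomial.eval 0 f) h
  simp at this

end AuxIEP


theorem stmt_15 (p q r : ℕ) (hp : 3 ≤ p) (hq : 3 ≤ q) (hr : 3 ≤ r)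
    (hpq : Nat.Coprime p q) (hqr : Nat.Coprime q r) (hrp : Nat.Coprime r p)
    (hbig : p + q ≤ r)
    (Q : Polynomial ℤ) (hQ : ternaryId p q r Q) :
    ∀ m : ℤ, |aCoeff Q m - aCoeff Q (m - (p : ℤ) * q)| ≤ 1 := by
  obtain ⟨ρ, σ, hρ, hσ, hrep⟩ := rep_exists p q hp hq hpq
  have hkey : (ρ+1)*p + (σ+1)*q = p*q + 1 := by
    have h1 : (p - 1) * (q - 1) + p + q = p*q + 1 := by
      have hp1 : 1 ≤ p := by omega
      have hq1 : 1 ≤ q := by omega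
      cases' Nat.exists_eq_add_of_le hp1 with a ha
      cases' Nat.exists_eq_add_of_le hq1 with b hb
      subst ha; subst hb
      simp [Nat.add_sub_cancel_left]
      ring
    calc (ρ+1)*p + (σ+1)*q = (ρ*p + σ*q) + p + q := by ring
      _ = (p-1)*(q-1) + p + q := by rw [hrep]
      _ = p*q + 1 := h1
  -- the polynomials
  set S1 : ℤ[X] := ∑ x ∈ range (ρ+1) ×ˢ range (σ+1), (X:ℤ[X])^(x.1*(p*r) + x.2*(q*r)) with hS1def
  set S2 : ℤ[X] := ∑ x ∈ Ico (ρ+1) q ×ˢ Ico (σ+1) p,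
      (X:ℤ[X])^(x.1*(p*r) + x.2*(q*r) - p*q*r) with hS2def
  set A : ℤ[X] := S1 - S2 with hAdef
  set H : ℤ[X] := (∑ i ∈ range q, (X:ℤ[X])^(p+i)) - ∑ i ∈ range q, (X:ℤ[X])^i with hHdef
  have hH : H * ((X:ℤ[X]) - 1) = ((X:ℤ[X])^p - 1) * ((X:ℤ[X])^q - 1) := by
    have e : H = ((X:ℤ[X])^p - 1) * ∑ i ∈ range q, (X:ℤ[X])^i := by
      rw [hHdef, sub_mul, one_mul, Finset.mul_sum]
      congr 1
      exact Finset.sum_congr rfl fun i _ => by rw [← pow_add]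
    rw [e, mul_assoc, geom_sum_mul]
  have hA := hA_lemma p q r ρ σ hρ hσ hkey
  rw [← hS1def, ← hS2def, ← hAdef] at hA
  -- identify Q * (X^(p*q) - 1) with A * H
  have hrp' : (X:ℤ[X])^(r*p) = X^(p*r) := by rw [mul_comm r p]
  have hM0 : ((X:ℤ[X])^(q*r) - 1) * ((X:ℤ[X])^(r*p) - 1) * ((X:ℤ[X]) - 1) * (X:ℤ[X])^(p*q*r)
      ≠ 0 := by
    apply mul_ne_zero
    apply mul_ne_zero
    apply mul_ne_zero
    · exact Xpow_sub_one_ne _ (by positivity)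
    · exact Xpow_sub_one_ne _ (by positivity)
    · exact X_sub_one_ne
    · exact pow_ne_zero _ X_ne_zero
  have hmain : Q * ((X:ℤ[X])^(p*q) - 1) = A * H := by
    apply mul_right_cancel₀ hM0
    have hQ' := hQ
    unfold ternaryId at hQ'
    calc Q * ((X:ℤ[X])^(p*q) - 1)
          * (((X:ℤ[X])^(q*r) - 1) * ((X:ℤ[X])^(r*p) - 1) * ((X:ℤ[X]) - 1) * (X:ℤ[X])^(p*q*r))
        = (((X:ℤ[X])^(p*q*r) - 1) * ((X:ℤ[X])^r - 1) * ((X:ℤ[X])^q - 1) * ((X:ℤ[X])^p - 1))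
            * (X:ℤ[X])^(p*q*r) := by
          linear_combination (X:ℤ[X])^(p*q*r) * hQ'
      _ = A * H
          * (((X:ℤ[X])^(q*r) - 1) * ((X:ℤ[X])^(r*p) - 1) * ((X:ℤ[X]) - 1) * (X:ℤ[X])^(p*q*r)) := by
          linear_combination (-(H * ((X:ℤ[X]) - 1))) * hA
            - (A * H * ((X:ℤ[X])^(q*r) - 1) * ((X:ℤ[X]) - 1) * (X:ℤ[X])^(p*q*r)) * hrp'
            - (((X:ℤ[X])^(p*q*r) - 1) * ((X:ℤ[X])^r - 1) * (X:ℤ[X])^(p*q*r)) * hH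
  -- coefficient bounds
  have hr0 : 0 < r := by omega
  have inj1 : Set.InjOn (fun x : ℕ × ℕ => x.1*(p*r) + x.2*(q*r))
      (range (ρ+1) ×ˢ range (σ+1) : Finset (ℕ × ℕ)) := by
    rintro ⟨i, j⟩ h ⟨i', j'⟩ h' heq
    simp only [Finset.coe_product, Set.mem_prod, Finset.mem_coe, Finset.mem_range] at h h'
    simp only at heq
    have h1 : (i*p + j*q)*r = (i'*p + j'*q)*r := by
      calc (i*p + j*q)*r = i*(p*r) + j*(q*r) := by ring
        _ = i'*(p*r) + j'*(q*r) := heq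
        _ = (i'*p + j'*q)*r := by ring
    have h2 : i*p + j*q = i'*p + j'*q := Nat.eq_of_mul_eq_mul_right hr0 h1
    obtain ⟨e1, e2⟩ := uniq_rep p q (by omega) hpq i j i' j' (by omega) (by omega) h2
    exact Prod.ext e1 e2
  have inj2 : Set.InjOn (fun x : ℕ × ℕ => x.1*(p*r) + x.2*(q*r) - p*q*r)
      (Ico (ρ+1) q ×ˢ Ico (σ+1) p : Finset (ℕ × ℕ)) := by
    rintro ⟨i, j⟩ h ⟨i', j'⟩ h' heq
    simp only [Finset.coe_product, Set.mem_prod, Finset.mem_coe, Finset.mem_Ico] at h h'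
    simp only at heq
    have hge : ∀ a b : ℕ, ρ+1 ≤ a → σ+1 ≤ b → p*q*r ≤ a*(p*r) + b*(q*r) := by
      intro a b ha hb
      have h2 : p*q + 1 ≤ a*p + b*q := by
        calc p*q + 1 = (ρ+1)*p + (σ+1)*q := hkey.symm
          _ ≤ a*p + b*q := Nat.add_le_add (Nat.mul_le_mul_right p ha) (Nat.mul_le_mul_right q hb)
      calc p*q*r ≤ (a*p + b*q)*r := Nat.mul_le_mul_right r (by omega)
        _ = a*(p*r) + b*(q*r) := by ring
    have g1 := hge i j h.1.1 h.2.1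
    have g2 := hge i' j' h'.1.1 h'.2.1
    have heq' : i*(p*r) + j*(q*r) = i'*(p*r) + j'*(q*r) := by omega
    have h1 : (i*p + j*q)*r = (i'*p + j'*q)*r := by
      calc (i*p + j*q)*r = i*(p*r) + j*(q*r) := by ring
        _ = i'*(p*r) + j'*(q*r) := heq'
        _ = (i'*p + j'*q)*r := by ring
    have h2 : i*p + j*q = i'*p + j'*q := Nat.eq_of_mul_eq_mul_right hr0 h1
    obtain ⟨e1, e2⟩ := uniq_rep p q (by omega) hpq i j i' j' (by omega) (by omega) h2
    exact Prod.ext e1 e2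
  have hAflat : ∀ u : ℕ, |A.coeff u| ≤ 1 := by
    intro u
    have c1 := flat_aux _ _ inj1 u
    have c2 := flat_aux _ _ inj2 u
    rw [hAdef, coeff_sub]
    rw [hS1def, hS2def]
    rw [abs_le]
    constructor <;> linarith [c1.1, c1.2, c2.1, c2.2]
  have hAdvd : ∀ u : ℕ, A.coeff u ≠ 0 → r ∣ u := by
    intro u hu
    rw [hAdef, coeff_sub] at hu
    have : S1.coeff u ≠ 0 ∨ S2.coeff u ≠ 0 := by
      by_contra hcon
      push_neg at hcon
      rw [hcon.1, hcon.2] at hu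
      simp at hu
    rcases this with h | h
    · obtain ⟨x, _, hx⟩ := supp_aux _ _ u (by rw [hS1def] at h; exact h)
      exact ⟨x.1*p + x.2*q, by rw [← hx]; ring⟩
    · obtain ⟨x, _, hx⟩ := supp_aux _ _ u (by rw [hS2def] at h; exact h)
      rw [← hx]
      apply Nat.dvd_sub
      · exact ⟨x.1*p + x.2*q, by ring⟩
      · exact ⟨p*q, by ring⟩
  have hHflat : ∀ v : ℕ, |H.coeff v| ≤ 1 := by
    intro v
    have c1 := flat_aux (range q) (fun i => p + i)
      (fun a _ b _ h => by simpa using h) v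
    have c2 := flat_aux (range q) (fun i => i) (fun a _ b _ h => h) v
    rw [hHdef, coeff_sub, abs_le]
    constructor <;> linarith [c1.1, c1.2, c2.1, c2.2]
  have hHsupp : ∀ v : ℕ, H.coeff v ≠ 0 → v < r := by
    intro v hv
    rw [hHdef, coeff_sub] at hv
    have : (∑ i ∈ range q, (X:ℤ[X])^(p+i)).coeff v ≠ 0 ∨
        (∑ i ∈ range q, (X:ℤ[X])^i).coeff v ≠ 0 := by
      by_contra hcon
      push_neg at hcon
      rw [hcon.1, hcon.2] at hv
      simp at hv
    rcases this with h | h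
    · obtain ⟨i, hi, hx⟩ := supp_aux _ _ v h
      simp only [Finset.mem_range] at hi
      omega
    · obtain ⟨i, hi, hx⟩ := supp_aux _ _ v h
      simp only [Finset.mem_range] at hi
      omega
  -- flatness of P = A * H
  have hPflat : ∀ n : ℕ, |(A * H).coeff n| ≤ 1 := by
    intro n
    rw [coeff_mul]
    have hmem : ((n - n % r, n % r) : ℕ × ℕ) ∈ Finset.HasAntidiagonal.antidiagonal n := by
      rw [Finset.HasAntidiagonal.mem_antidiagonal]
      exact Nat.sub_add_cancel (Nat.mod_le n r)
    have heq : ∑ x ∈ Finset.HasAntidiagonal.antidiagonal n, A.coeff x.1 * H.coeff x.2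
        = A.coeff (n - n % r) * H.coeff (n % r) := by
      apply Finset.sum_eq_single (f := fun x : ℕ × ℕ => A.coeff x.1 * H.coeff x.2)
        ((n - n % r, n % r) : ℕ × ℕ)
      · rintro ⟨u, v⟩ hb hne
        rw [Finset.HasAntidiagonal.mem_antidiagonal] at hb
        by_contra hzero
        have hu : A.coeff u ≠ 0 := fun h => hzero (by rw [h, zero_mul])
        have hv : H.coeff v ≠ 0 := fun h => hzero (by rw [h, mul_zero])
        have hdu : r ∣ u := hAdvd u hu
        have hvr : v < r := hHsupp v hv
        have hveq : v = n % r := by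
          obtain ⟨c, hc⟩ := hdu
          subst hc
          subst hb
          rw [Nat.add_mod, Nat.mul_mod_right, Nat.zero_add, Nat.mod_mod_of_dvd]
          · exact (Nat.mod_eq_of_lt hvr).symm
          · exact dvd_rfl
        apply hne
        have : u = n - n % r := by omega
        rw [this, hveq]
      · intro hnot
        exact absurd hmem hnot
    rw [heq, abs_mul]
    calc |A.coeff (n - n % r)| * |H.coeff (n % r)| ≤ 1 * 1 :=
        mul_le_mul (hAflat _) (hHflat _) (abs_nonneg _) (by norm_num)
      _ = 1 := by norm_num
  -- conclude
  intro m
  by_cases hm : 0 ≤ m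
  · set n := m.toNat with hn
    have hmn : (m : ℤ) = (n : ℤ) := by omega
    set k := p * q with hkpq
    have hkz : (p : ℤ) * q = (k : ℤ) := by rw [hkpq]; push_cast; ring
    have hcoeffP : (A * H).coeff n = (if k ≤ n then Q.coeff (n - k) else 0) - Q.coeff n := by
      rw [← hmain, mul_sub, mul_one, coeff_sub, coeff_mul_X_pow']
    have hv1 : aCoeff Q m = Q.coeff n := by rw [aCoeff, if_pos hm]
    have hv2 : aCoeff Q (m - (p:ℤ)*q) = if k ≤ n then Q.coeff (n - k) else 0 := by
      rw [hkz, aCoeff]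
      by_cases hc : k ≤ n
      · rw [if_pos (by omega), if_pos hc]
        congr 1
        omega
      · rw [if_neg (by omega), if_neg hc]
    rw [hv1, hv2]
    have : Q.coeff n - (if k ≤ n then Q.coeff (n - k) else 0) = -((A*H).coeff n) := by
      rw [hcoeffP]; ring
    rw [this, abs_neg]
    exact hPflat n
  · push_neg at hm
    have h1 : aCoeff Q m = 0 := by rw [aCoeff, if_neg (by omega)]
    have h2 : aCoeff Q (m - (p:ℤ)*q) = 0 := by
      rw [aCoeff, if_neg]
      have : (0:ℤ) < (p:ℤ)*q := by positivity
      omega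
    rw [h1, h2]
    norm_num
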